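/- Fix θ₀ ∈ ℝ, let l be the number of anti-Stokes directions in the half-period [θ₀, θ₀ + π/(k−1)), and label the anti-Stokes directions in [θ₀, θ₀ + 2π) in increasing order as d₁ < d₂ < ⋯ < d_r, so r = (2k−2)·l. Let P be the permutation matrix of the total order determined by the first half-period (d₁, …, d_l). Then the map ∏_{t=1}^{r} Sto(d_t) → (U₊ × U₋)^{k−1}, (K₁, …, K_r) ↦ (S₁, …, S_{2k−2}) with S_i := P⁻¹·K_{il}·K_{il−1} ⋯ K_{(i−1)l+1}·P, is well defined (S_i is upper-triangular unipotent for odd i and lower-triangular unipotent for even i) and is a bijection. -/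

import Mathlib

open scoped Classical


/-- `(i,j)` is a root of the direction `θ`: `(uᵢ − uⱼ)·exp(−√−1(k−1)θ)` is a negative
real number. -/
def IsRoot {n : ℕ} (u : Fin n → ℂ) (k : ℕ) (i j : Fin n) (θ : ℝ) : Prop :=
  ∃ r : ℝ, r < 0 ∧ (u i - u j) * Complex.exp (-(Complex.I * ((k : ℂ) - 1) * (θ : ℂ))) = (r : ℂ)

/-- `θ` is an anti-Stokes direction: some ordered pair `(i,j)`, `i ≠ j`, is a root of `θ`. -/
def IsAntiStokes {n : ℕ} (u : Fin n → ℂ) (k : ℕ) (θ : ℝ) : Prop :=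
  ∃ i j : Fin n, i ≠ j ∧ IsRoot u k i j θ

/-- Membership in the group of Stokes factors `Sto(d)`: `K_{ij} = δ_{ij}` unless `(i,j)` is
a root of `d`. -/
def StoMem {n : ℕ} (u : Fin n → ℂ) (k : ℕ) (d : ℝ) (K : Matrix (Fin n) (Fin n) ℂ) : Prop :=
  (∀ i, K i i = 1) ∧ ∀ i j : Fin n, i ≠ j → ¬ IsRoot u k i j d → K i j = 0

/-- An `n×n` complex matrix is upper-triangular unipotent if its diagonal entries are `1`
and its entries below the diagonal vanish. -/
def IsUpperUnipotent {n : ℕ} (A : Matrix (Fin n) (Fin n) ℂ) : Prop :=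
  (∀ i, A i i = 1) ∧ ∀ i j : Fin n, j < i → A i j = 0

/-- An `n×n` complex matrix is lower-triangular unipotent if its diagonal entries are `1`
and its entries above the diagonal vanish. -/
def IsLowerUnipotent {n : ℕ} (A : Matrix (Fin n) (Fin n) ℂ) : Prop :=
  (∀ i, A i i = 1) ∧ ∀ i j : Fin n, i < j → A i j = 0


section Analytic

variable {n k : ℕ} (u : Fin n → ℂ)

lemma isRoot_usub_ne {i j : Fin n} {θ : ℝ} (h : IsRoot u k i j θ) : u i - u j ≠ 0 := by
  obtain ⟨r, hr, heq⟩ := h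
  intro h0
  rw [h0, zero_mul] at heq
  have : r = 0 := by exact_mod_cast heq.symm
  linarith

lemma isRoot_ne {i j : Fin n} {θ : ℝ} (h : IsRoot u k i j θ) : i ≠ j :=
  fun he => isRoot_usub_ne u h (by rw [he, sub_self])

lemma exp_shift (hk : 2 ≤ k) (θ : ℝ) :
    Complex.exp (-(Complex.I * ((k : ℂ) - 1) * ((θ + Real.pi / ((k : ℝ) - 1) : ℝ) : ℂ)))
      = - Complex.exp (-(Complex.I * ((k : ℂ) - 1) * (θ : ℂ))) := by
  have hk1 : ((k : ℂ) - 1) ≠ 0 := by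
    intro h
    have h2 : (k : ℂ) = ((1 : ℕ) : ℂ) := by push_cast; linear_combination h
    exact absurd (Nat.cast_inj.mp h2) (by omega)
  have hkR : ((k : ℝ) - 1) ≠ 0 := by
    have : (2 : ℝ) ≤ (k : ℝ) := by exact_mod_cast hk
    intro h; linarith
  have harg : -(Complex.I * ((k : ℂ) - 1) * ((θ + Real.pi / ((k : ℝ) - 1) : ℝ) : ℂ))
      = -(Complex.I * ((k : ℂ) - 1) * (θ : ℂ)) + -(Real.pi * Complex.I) := by
    push_cast
    field_simp
    ring
  have h5 : Complex.exp (-(Real.pi * Complex.I)) = -1 := by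
    rw [Complex.exp_neg, Complex.exp_pi_mul_I]; norm_num
  rw [harg, Complex.exp_add, h5]
  ring

lemma isRoot_shift (hk : 2 ≤ k) {i j : Fin n} {θ : ℝ} :
    IsRoot u k i j (θ + Real.pi / ((k : ℝ) - 1)) ↔ IsRoot u k j i θ := by
  unfold IsRoot
  constructor
  · rintro ⟨r, hr, heq⟩
    rw [exp_shift hk θ] at heq
    exact ⟨r, hr, by linear_combination heq⟩
  · rintro ⟨r, hr, heq⟩
    refine ⟨r, hr, ?_⟩
    rw [exp_shift hk θ]
    linear_combination heq

lemma isRoot_shift_nat (hk : 2 ≤ k) (m : ℕ) {θ : ℝ} :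
    ∀ i j : Fin n, IsRoot u k i j (θ + m * (Real.pi / ((k : ℝ) - 1)))
      ↔ if Even m then IsRoot u k i j θ else IsRoot u k j i θ := by
  induction m with
  | zero => intro i j; simp
  | succ m ih =>
    intro i j
    have harg : θ + ((m + 1 : ℕ) : ℝ) * (Real.pi / ((k : ℝ) - 1))
        = (θ + m * (Real.pi / ((k : ℝ) - 1))) + Real.pi / ((k : ℝ) - 1) := by
      push_cast; ring
    rw [harg, isRoot_shift u hk, ih j i]
    rcases Nat.even_or_odd m with he | ho
    · rw [if_pos he, if_neg (by simp [Nat.even_add_one, he])]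
    · rw [if_neg (by simp [Nat.not_even_iff_odd.mpr ho]), if_pos (by simp [Nat.even_add_one, Nat.not_even_iff_odd.mpr ho])]

lemma antiStokes_shift (hk : 2 ≤ k) {θ : ℝ} :
    IsAntiStokes u k (θ + Real.pi / ((k : ℝ) - 1)) ↔ IsAntiStokes u k θ := by
  constructor
  · rintro ⟨i, j, hij, hr⟩
    exact ⟨j, i, hij.symm, (isRoot_shift u hk).mp hr⟩
  · rintro ⟨i, j, hij, hr⟩
    exact ⟨j, i, hij.symm, (isRoot_shift u hk).mpr hr⟩

lemma isRoot_inj (hk : 2 ≤ k) {i j : Fin n} {θ θ' : ℝ}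
    (h1 : IsRoot u k i j θ) (h2 : IsRoot u k i j θ')
    (hclose : |θ - θ'| < Real.pi / ((k : ℝ) - 1)) : θ = θ' := by
  have hc : u i - u j ≠ 0 := isRoot_usub_ne u h1
  obtain ⟨r, hr, heq⟩ := h1
  obtain ⟨r', hr', heq'⟩ := h2
  have hkR : (1 : ℝ) ≤ (k : ℝ) - 1 := by
    have : (2 : ℝ) ≤ (k : ℝ) := by exact_mod_cast hk
    linarith
  have hkR0 : ((k : ℝ) - 1) ≠ 0 := by linarith
  set A := -(Complex.I * ((k : ℂ) - 1) * (θ : ℂ)) with hA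
  set A' := -(Complex.I * ((k : ℂ) - 1) * (θ' : ℂ)) with hA'
  have hrr' : (r : ℂ) * Complex.exp A' = (r' : ℂ) * Complex.exp A := by
    rw [← heq, ← heq']; ring
  have hr'0 : r' ≠ 0 := ne_of_lt hr'
  have hexp : Complex.exp (A - A') = ((r / r' : ℝ) : ℂ) := by
    rw [Complex.exp_sub]
    have hEne : Complex.exp A' ≠ 0 := Complex.exp_ne_zero _
    push_cast
    rw [div_eq_div_iff hEne (by exact_mod_cast hr'0)]
    linear_combination -hrr'
  have habs : ‖Complex.exp (A - A')‖ = 1 := by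
    rw [Complex.norm_exp]
    have hre : (A - A').re = 0 := by
      simp [hA, hA', Complex.sub_re, Complex.mul_re, Complex.mul_im]
    rw [hre, Real.exp_zero]
  have hratio : r / r' = 1 := by
    have habs1 : |r / r'| = 1 := by
      rw [← Real.norm_eq_abs, ← Complex.norm_real, ← hexp, habs]
    have hpos : 0 < r / r' := div_pos_of_neg_of_neg hr hr'
    rwa [abs_of_pos hpos] at habs1
  have hone : Complex.exp (A - A') = 1 := by
    rw [hexp, hratio]; norm_num
  obtain ⟨m, hm⟩ := Complex.exp_eq_one_iff.mp hone
  set x : ℝ := ((k : ℝ) - 1) * (θ' - θ) with hx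
  have hAx : A - A' = (x : ℂ) * Complex.I := by
    rw [hA, hA', hx]; push_cast; ring
  rw [hAx] at hm
  have hxm : (x : ℂ) = (m : ℂ) * (2 * Real.pi) := by
    apply mul_right_cancel₀ Complex.I_ne_zero
    linear_combination hm
  have hxmR : x = (m : ℝ) * (2 * Real.pi) := by exact_mod_cast hxm
  have hπ : 0 < Real.pi := Real.pi_pos
  have hxlt : |x| < Real.pi := by
    rw [hx, abs_mul, abs_of_pos (by linarith), abs_sub_comm]
    calc ((k : ℝ) - 1) * |θ - θ'| < ((k : ℝ) - 1) * (Real.pi / ((k : ℝ) - 1)) := by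
          apply mul_lt_mul_of_pos_left hclose (by linarith)
      _ = Real.pi := by field_simp
  have hm0 : m = 0 := by
    by_contra hm0
    have h1 : (1 : ℝ) ≤ |(m : ℝ)| := by
      have h0 : (1 : ℤ) ≤ |m| := Int.one_le_abs hm0
      exact_mod_cast h0
    have : |x| = |(m : ℝ)| * (2 * Real.pi) := by
      rw [hxmR, abs_mul, abs_of_pos (show (0:ℝ) < 2 * Real.pi by linarith)]
    nlinarith
  rw [hm0] at hxmR
  norm_num at hxmR
  have h9 : ((k : ℝ) - 1) * (θ' - θ) = 0 := by rw [← hx]; exact hxmR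
  rcases mul_eq_zero.mp h9 with h | h
  · exact absurd h hkR0
  · linarith


lemma antiStokes_shift_iter {n k : ℕ} (u : Fin n → ℂ) (hk : 2 ≤ k) (m : ℕ) (θ : ℝ)
    (hAS : IsAntiStokes u k θ) :
    IsAntiStokes u k (θ + m * (Real.pi / ((k : ℝ) - 1))) := by
  induction m with
  | zero => simpa using hAS
  | succ m ih =>
    have harg : θ + ((m + 1 : ℕ) : ℝ) * (Real.pi / ((k : ℝ) - 1))
        = (θ + m * (Real.pi / ((k : ℝ) - 1))) + Real.pi / ((k : ℝ) - 1) := by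
      push_cast; ring
    rw [harg]
    exact (antiStokes_shift u hk).mpr ih

end Analytic

section Core

variable {n l : ℕ} (ρ : Fin n → ℕ) (R : Fin l → Fin n → Fin n → Prop)

/-- matrices with unit diagonal supported above the order `ρ` -/
def UnipR (N : Matrix (Fin n) (Fin n) ℂ) : Prop :=
  (∀ i, N i i = 1) ∧ ∀ i j : Fin n, i ≠ j → ¬ ρ i < ρ j → N i j = 0

def StoR (t : Fin l) (K : Matrix (Fin n) (Fin n) ℂ) : Prop :=
  (∀ i, K i i = 1) ∧ ∀ i j : Fin n, i ≠ j → ¬ R t i j → K i j = 0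

lemma unipR_one : UnipR ρ (1 : Matrix (Fin n) (Fin n) ℂ) :=
  ⟨fun i => Matrix.one_apply_eq i, fun i j hij _ => Matrix.one_apply_ne hij⟩

lemma unipR_mul {M N : Matrix (Fin n) (Fin n) ℂ} (hM : UnipR ρ M) (hN : UnipR ρ N) :
    UnipR ρ (M * N) := by
  constructor
  · intro i
    rw [Matrix.mul_apply]
    rw [Finset.sum_eq_single i]
    · rw [hM.1, hN.1, one_mul]
    · intro a _ ha
      by_cases hMa : M i a = 0
      · rw [hMa, zero_mul]
      · have hρ : ρ i < ρ a := by
          by_contra hc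
          exact hMa (hM.2 i a (Ne.symm ha) hc)
        rw [hN.2 a i ha (by omega), mul_zero]
    · intro h; exact absurd (Finset.mem_univ i) h
  · intro i j hij hρ
    rw [Matrix.mul_apply]
    apply Finset.sum_eq_zero
    intro a _
    by_cases hai : a = i
    · subst hai; rw [hN.2 a j hij hρ, mul_zero]
    by_cases haj : a = j
    · subst haj; rw [hM.2 i a hij hρ, zero_mul]
    by_cases hMa : M i a = 0
    · rw [hMa, zero_mul]
    have h1 : ρ i < ρ a := by
      by_contra hc
      exact hMa (hM.2 i a (fun h => hai h.symm) hc)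
    have h2 : N a j = 0 := by
      apply hN.2 a j haj
      intro h2
      exact hρ (lt_trans h1 h2)
    rw [h2, mul_zero]

lemma stoR_unipR (hsub : ∀ t i j, R t i j → ρ i < ρ j)
    {t : Fin l} {K : Matrix (Fin n) (Fin n) ℂ} (hK : StoR R t K) :
    UnipR ρ K := by
  refine ⟨hK.1, fun i j hij hρ => hK.2 i j hij fun hR => hρ (hsub t i j hR)⟩

/-- the Stokes factor matrix built from an entry function `e` -/
noncomputable def Kmat (e : Fin n → Fin n → ℂ) (t : Fin l) : Matrix (Fin n) (Fin n) ℂ :=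
  fun i j => if i = j then 1 else if R t i j then e i j else 0

lemma Kmat_stoR (e : Fin n → Fin n → ℂ) (t : Fin l) : StoR R t (Kmat R e t) := by
  constructor
  · intro i; simp [Kmat]
  · intro i j hij hR; simp [Kmat, hij, hR]

/-- partial reversed product of the first `s` Stokes factors -/
noncomputable def Psi (e : Fin n → Fin n → ℂ) (s : ℕ) : Matrix (Fin n) (Fin n) ℂ :=
  ((List.ofFn (Kmat R e)).take s).reverse.prod

lemma Psi_zero (e : Fin n → Fin n → ℂ) : Psi R e 0 = 1 := by
  simp [Psi]

lemma Psi_succ (e : Fin n → Fin n → ℂ) {s : ℕ} (hs : s < l) :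
    Psi R e (s + 1) = Kmat R e ⟨s, hs⟩ * Psi R e s := by
  unfold Psi
  rw [List.take_succ]
  have hlen : s < (List.ofFn (Kmat R e)).length := by simp [hs]
  rw [List.getElem?_eq_getElem hlen]
  simp [List.reverse_append]

lemma Psi_top (e : Fin n → Fin n → ℂ) :
    Psi R e l = (List.ofFn (Kmat R e)).reverse.prod := by
  unfold Psi
  rw [List.take_of_length_le (by simp)]

lemma Psi_unipR (hsub : ∀ t i j, R t i j → ρ i < ρ j) (e : Fin n → Fin n → ℂ) (s : ℕ) :
    UnipR ρ (Psi R e s) := by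
  induction s with
  | zero => rw [Psi_zero]; exact unipR_one ρ
  | succ s ih =>
    by_cases hs : s < l
    · rw [Psi_succ R e hs]
      exact unipR_mul ρ (stoR_unipR ρ R hsub (Kmat_stoR R e _)) ih
    · have h1 : Psi R e (s + 1) = Psi R e s := by
        unfold Psi
        rw [List.take_of_length_le (by simp only [List.length_ofFn]; omega),
          List.take_of_length_le (by simp only [List.length_ofFn]; omega)]
      rw [h1]; exact ih

noncomputable def betaF (e : Fin n → Fin n → ℂ) (s : ℕ) (i j : Fin n) : ℂ :=
  if ∃ t : Fin l, (t : ℕ) < s ∧ R t i j then e i j else 0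

lemma keyA (hsub : ∀ t i j, R t i j → ρ i < ρ j)
    (huniq : ∀ t t' i j, R t i j → R t' i j → t = t') :
    ∀ (s : ℕ), s ≤ l → ∀ (e e' : Fin n → Fin n → ℂ) (i j : Fin n), ρ i < ρ j →
    (∀ a b : Fin n, ρ a < ρ b → ρ b - ρ a < ρ j - ρ i → e a b = e' a b) →
    Psi R e s i j - betaF R e s i j = Psi R e' s i j - betaF R e' s i j := by
  intro s
  induction s with
  | zero =>
    intro _ e e' i j hρ _
    have hij : i ≠ j := fun h => by subst h; exact lt_irrefl _ hρ
    have hb : ∀ f : Fin n → Fin n → ℂ, betaF R f 0 i j = 0 := by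
      intro f; unfold betaF
      rw [if_neg]; rintro ⟨t, ht, -⟩; omega
    rw [Psi_zero, Psi_zero, hb, hb, Matrix.one_apply_ne hij]
  | succ s ihs =>
    intro hsl1 e e' i j hρ hagree
    have hsl : s < l := by omega
    have hij : i ≠ j := fun h => by subst h; exact lt_irrefl _ hρ
    have expand : ∀ f : Fin n → Fin n → ℂ, Psi R f (s + 1) i j =
        (∑ a ∈ (Finset.univ.erase j).erase i,
          (if R ⟨s, hsl⟩ i a then f i a else 0) * Psi R f s a j)
          + Psi R f s i j + (if R ⟨s, hsl⟩ i j then f i j else 0) := by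
      intro f
      rw [Psi_succ R f hsl, Matrix.mul_apply,
        ← Finset.sum_erase_add _ _ (Finset.mem_univ j),
        ← Finset.sum_erase_add _ _ (Finset.mem_erase.mpr ⟨hij, Finset.mem_univ i⟩)]
      have h1 : Kmat R f ⟨s, hsl⟩ i i = 1 := (Kmat_stoR R f _).1 i
      have h2 : Psi R f s j j = 1 := (Psi_unipR ρ R hsub f s).1 j
      have h3 : Kmat R f ⟨s, hsl⟩ i j = if R ⟨s, hsl⟩ i j then f i j else 0 := by
        simp [Kmat, hij]
      rw [h1, h2, h3, one_mul, mul_one]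
      congr 1
      congr 1
      apply Finset.sum_congr rfl
      intro a ha
      have hai : a ≠ i := (Finset.mem_erase.mp ha).1
      have hia : ¬ i = a := fun h => hai h.symm
      simp [Kmat, hia]
    have hC : (∑ a ∈ (Finset.univ.erase j).erase i,
          (if R ⟨s, hsl⟩ i a then e i a else 0) * Psi R e s a j)
        = ∑ a ∈ (Finset.univ.erase j).erase i,
          (if R ⟨s, hsl⟩ i a then e' i a else 0) * Psi R e' s a j := by
      apply Finset.sum_congr rfl
      intro a ha
      have hai : a ≠ i := (Finset.mem_erase.mp ha).1
      have haj : a ≠ j := (Finset.mem_erase.mp (Finset.mem_erase.mp ha).2).1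
      by_cases hRa : R ⟨s, hsl⟩ i a
      · have hρia : ρ i < ρ a := hsub _ _ _ hRa
        by_cases hρaj : ρ a < ρ j
        · have he : e i a = e' i a := hagree i a hρia (by omega)
          have hPsi : Psi R e s a j = Psi R e' s a j := by
            have h1 := ihs (by omega) e e' a j hρaj
              (fun x y hxy hgap => hagree x y hxy (by omega))
            have h2 : betaF R e s a j = betaF R e' s a j := by
              unfold betaF; rw [hagree a j hρaj (by omega)]
            rw [h2] at h1
            exact sub_left_inj.mp h1
          rw [he, hPsi]
        · rw [(Psi_unipR ρ R hsub e s).2 a j haj hρaj,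
            (Psi_unipR ρ R hsub e' s).2 a j haj hρaj, mul_zero, mul_zero]
      · simp [hRa]
    have hmain := ihs (by omega) e e' i j hρ hagree
    by_cases hR : R ⟨s, hsl⟩ i j
    · have hb0 : ∀ f : Fin n → Fin n → ℂ, betaF R f s i j = 0 := by
        intro f; unfold betaF
        rw [if_neg]
        rintro ⟨t, ht, hRt⟩
        have h5 := huniq t ⟨s, hsl⟩ i j hRt hR
        have h6 : (t : ℕ) = s := by rw [h5]
        omega
      have hb1 : ∀ f : Fin n → Fin n → ℂ, betaF R f (s + 1) i j = f i j := by
        intro f; unfold betaF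
        rw [if_pos ⟨⟨s, hsl⟩, by simp, hR⟩]
      rw [hb0, hb0] at hmain
      rw [expand e, expand e', hb1, hb1, if_pos hR, if_pos hR]
      simp only [sub_zero] at hmain
      linear_combination hC + hmain
    · have hb : ∀ f : Fin n → Fin n → ℂ, betaF R f (s + 1) i j = betaF R f s i j := by
        intro f; unfold betaF
        apply if_congr _ rfl rfl
        constructor
        · rintro ⟨t, ht, hRt⟩
          refine ⟨t, ?_, hRt⟩
          rcases Nat.lt_succ_iff_lt_or_eq.mp ht with h | h
          · exact h
          · exfalso; apply hR
            have : t = ⟨s, hsl⟩ := Fin.ext h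
            exact this ▸ hRt
        · rintro ⟨t, ht, hRt⟩; exact ⟨t, by omega, hRt⟩
      rw [expand e, expand e', hb, hb, if_neg hR, if_neg hR]
      linear_combination hC + hmain

lemma unipR_list_prod (L : List (Matrix (Fin n) (Fin n) ℂ)) (h : ∀ M ∈ L, UnipR ρ M) :
    UnipR ρ L.prod := by
  induction L with
  | nil => simpa using unipR_one ρ
  | cons M L ih =>
    rw [List.prod_cons]
    exact unipR_mul ρ (h M (by simp)) (ih fun M' hM' => h M' (by simp [hM']))

lemma core_rep (huniq : ∀ t t' i j, R t i j → R t' i j → t = t')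
    (K : Fin l → Matrix (Fin n) (Fin n) ℂ) (hK : ∀ t, StoR R t (K t)) :
    ∃ e, ∀ t, K t = Kmat R e t := by
  refine ⟨fun i j => if h : ∃ t, R t i j then K h.choose i j else 0, fun t => ?_⟩
  apply Matrix.ext; intro i j
  by_cases hij : i = j
  · subst hij
    simp only [Kmat, if_pos rfl]
    exact (hK t).1 i
  · by_cases hR : R t i j
    · have hex : ∃ t, R t i j := ⟨t, hR⟩
      have hch : hex.choose = t := huniq _ _ _ _ hex.choose_spec hR
      simp only [Kmat, if_neg hij, if_pos hR, dif_pos hex, hch]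
    · simp only [Kmat, if_neg hij, if_neg hR]
      exact (hK t).2 i j hij hR

lemma core_inj (hsub : ∀ t i j, R t i j → ρ i < ρ j)
    (huniq : ∀ t t' i j, R t i j → R t' i j → t = t')
    (hcov : ∀ i j, ρ i < ρ j → ∃ t, R t i j)
    (K K' : Fin l → Matrix (Fin n) (Fin n) ℂ)
    (hK : ∀ t, StoR R t (K t)) (hK' : ∀ t, StoR R t (K' t))
    (hprod : (List.ofFn K).reverse.prod = (List.ofFn K').reverse.prod) : K = K' := by
  obtain ⟨e, he⟩ := core_rep R huniq K hK
  obtain ⟨e', he'⟩ := core_rep R huniq K' hK'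
  have hΦ : Psi R e l = Psi R e' l := by
    rw [Psi_top, Psi_top]
    have h1 : List.ofFn (Kmat R e) = List.ofFn K := by
      congr 1; funext t; exact (he t).symm
    have h2 : List.ofFn (Kmat R e') = List.ofFn K' := by
      congr 1; funext t; exact (he' t).symm
    rw [h1, h2, hprod]
  have hagree : ∀ γ : ℕ, ∀ a b : Fin n, ρ a < ρ b → ρ b - ρ a ≤ γ → e a b = e' a b := by
    intro γ
    induction γ with
    | zero => intro a b h1 h2; omega
    | succ γ ih =>
      intro a b h1 h2
      by_cases hle : ρ b - ρ a ≤ γ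
      · exact ih a b h1 hle
      · have h3 := keyA ρ R hsub huniq l le_rfl e e' a b h1
          (fun x y hxy hgap => ih x y hxy (by omega))
        have hb1 : betaF R e l a b = e a b := by
          unfold betaF
          exact if_pos ((hcov a b h1).elim fun t ht => ⟨t, t.2, ht⟩)
        have hb2 : betaF R e' l a b = e' a b := by
          unfold betaF
          exact if_pos ((hcov a b h1).elim fun t ht => ⟨t, t.2, ht⟩)
        have h4 : Psi R e l a b = Psi R e' l a b := by rw [hΦ]
        rw [hb1, hb2, h4] at h3
        exact sub_right_inj.mp h3
  funext t
  rw [he t, he' t]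
  apply Matrix.ext; intro i j
  by_cases hij : i = j
  · simp [Kmat, hij]
  · by_cases hR : R t i j
    · have hρ := hsub t i j hR
      simp only [Kmat, if_neg hij, if_pos hR]
      exact hagree (ρ j - ρ i) i j hρ le_rfl
    · simp [Kmat, hij, hR]

noncomputable def Eseq (N : Matrix (Fin n) (Fin n) ℂ) : ℕ → Fin n → Fin n → ℂ
  | 0 => fun _ _ => 0
  | (γ + 1) => fun a b =>
      if ρ a < ρ b ∧ ρ b - ρ a = γ + 1 then
        N a b - Psi R (Eseq N γ) l a b + Eseq N γ a b
      else Eseq N γ a b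

lemma Eseq_stable (N : Matrix (Fin n) (Fin n) ℂ) :
    ∀ γ' γ, γ ≤ γ' → ∀ a b : Fin n, ρ b - ρ a ≤ γ →
      Eseq ρ R N γ' a b = Eseq ρ R N γ a b := by
  intro γ'
  induction γ' with
  | zero =>
    intro γ hγ a b _
    have : γ = 0 := by omega
    subst this; rfl
  | succ γ' ih =>
    intro γ hγ a b hgap
    by_cases hγ' : γ = γ' + 1
    · subst hγ'; rfl
    · have h2 : γ ≤ γ' := by omega
      have hstep : Eseq ρ R N (γ' + 1) a b = Eseq ρ R N γ' a b := by
        simp only [Eseq]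
        rw [if_neg]
        rintro ⟨h3, h4⟩
        omega
      rw [hstep, ih γ h2 a b hgap]

lemma core_surj (hsub : ∀ t i j, R t i j → ρ i < ρ j)
    (huniq : ∀ t t' i j, R t i j → R t' i j → t = t')
    (hcov : ∀ i j, ρ i < ρ j → ∃ t, R t i j)
    (N : Matrix (Fin n) (Fin n) ℂ) (hN : UnipR ρ N) :
    ∃ K : Fin l → Matrix (Fin n) (Fin n) ℂ,
      (∀ t, StoR R t (K t)) ∧ (List.ofFn K).reverse.prod = N := by
  set e : Fin n → Fin n → ℂ := fun a b => Eseq ρ R N (ρ b - ρ a) a b with he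
  refine ⟨Kmat R e, fun t => Kmat_stoR R e t, ?_⟩
  rw [← Psi_top]
  apply Matrix.ext; intro a b
  by_cases hab : a = b
  · subst hab
    rw [(Psi_unipR ρ R hsub e l).1 a, hN.1 a]
  · by_cases hρ : ρ a < ρ b
    · set γ := ρ b - ρ a - 1 with hγdef
      have hgap : ρ b - ρ a = γ + 1 := by omega
      have hagree : ∀ x y : Fin n, ρ x < ρ y → ρ y - ρ x < ρ b - ρ a →
          e x y = Eseq ρ R N γ x y := by
        intro x y h1 h2
        exact (Eseq_stable ρ R N γ (ρ y - ρ x) (by omega) x y le_rfl).symm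
      have h3 := keyA ρ R hsub huniq l le_rfl e (Eseq ρ R N γ) a b hρ
        (fun x y h1 h2 => hagree x y h1 (by omega))
      have hb1 : betaF R e l a b = e a b := by
        unfold betaF
        exact if_pos ((hcov a b hρ).elim fun t ht => ⟨t, t.2, ht⟩)
      have hb2 : betaF R (Eseq ρ R N γ) l a b = Eseq ρ R N γ a b := by
        unfold betaF
        exact if_pos ((hcov a b hρ).elim fun t ht => ⟨t, t.2, ht⟩)
      have he2 : e a b = N a b - Psi R (Eseq ρ R N γ) l a b + Eseq ρ R N γ a b := by
        show Eseq ρ R N (ρ b - ρ a) a b = _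
        rw [hgap]
        simp only [Eseq]
        rw [if_pos ⟨hρ, hgap⟩]
      rw [hb1, hb2] at h3
      linear_combination h3 + he2
    · rw [(Psi_unipR ρ R hsub e l).2 a b hab hρ, hN.2 a b hab hρ]

end Core

section PermAux

variable {n : ℕ} (σ : Equiv.Perm (Fin n)) (P Q : Matrix (Fin n) (Fin n) ℂ)

lemma perm_facts
    (hP : ∀ i j, P i j = if σ i = j then 1 else 0)
    (hQ : ∀ i j, Q i j = if σ j = i then 1 else 0) :
    P * Q = 1 ∧ Q * P = 1 ∧
      ∀ (X : Matrix (Fin n) (Fin n) ℂ) a b, (Q * X * P) a b = X (σ.symm a) (σ.symm b) := by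
  have hPQ : P * Q = 1 := by
    ext a b
    rw [Matrix.mul_apply]
    rw [Finset.sum_eq_single (σ a)]
    · rw [hP, hQ, if_pos rfl, one_mul, Matrix.one_apply]
      by_cases hab : a = b
      · subst hab; rw [if_pos rfl, if_pos rfl]
      · rw [if_neg (fun h => hab (σ.injective h).symm), if_neg hab]
    · intro x _ hx
      rw [hP, if_neg (fun h => hx h.symm), zero_mul]
    · intro hmem; exact absurd (Finset.mem_univ _) hmem
  have hQP : Q * P = 1 := by
    ext a b
    rw [Matrix.mul_apply]
    rw [Finset.sum_eq_single (σ.symm a)]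
    · rw [hP, hQ, Equiv.apply_symm_apply, if_pos rfl, one_mul, Matrix.one_apply]
    · intro x _ hx
      rw [hQ, if_neg (fun h => hx (by rw [← h, Equiv.symm_apply_apply])), zero_mul]
    · intro hmem; exact absurd (Finset.mem_univ _) hmem
  refine ⟨hPQ, hQP, ?_⟩
  intro X a b
  have h1 : (X * P) (σ.symm a) b = X (σ.symm a) (σ.symm b) := by
    rw [Matrix.mul_apply]
    rw [Finset.sum_eq_single (σ.symm b)]
    · rw [hP, Equiv.apply_symm_apply, if_pos rfl, mul_one]
    · intro x _ hx
      rw [hP, if_neg (fun h => hx (by rw [← h, Equiv.symm_apply_apply])), mul_zero]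
    · intro hmem; exact absurd (Finset.mem_univ _) hmem
  rw [Matrix.mul_assoc, Matrix.mul_apply]
  rw [Finset.sum_eq_single (σ.symm a)]
  · rw [hQ, Equiv.apply_symm_apply, if_pos rfl, one_mul, h1]
  · intro x _ hx
    rw [hQ, if_neg (fun h => hx (by rw [← h, Equiv.symm_apply_apply])), zero_mul]
  · intro hmem; exact absurd (Finset.mem_univ _) hmem

variable {σ P Q}

lemma upper_iff_unipR
    (hconj : ∀ (X : Matrix (Fin n) (Fin n) ℂ) a b, (Q * X * P) a b = X (σ.symm a) (σ.symm b))
    (N : Matrix (Fin n) (Fin n) ℂ) :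
    IsUpperUnipotent (Q * N * P) ↔ UnipR (fun x => ((σ x : ℕ))) N := by
  constructor
  · intro hA
    constructor
    · intro i
      have := hA.1 (σ i)
      rwa [hconj, Equiv.symm_apply_apply] at this
    · intro i j hij hρ
      have hρ' : ¬ ((σ i : ℕ) < (σ j : ℕ)) := hρ
      have hij' : (σ i : ℕ) ≠ (σ j : ℕ) := fun h => hij (σ.injective (Fin.ext h))
      have hji : σ j < σ i := by rw [Fin.lt_def]; omega
      have := hA.2 (σ i) (σ j) hji
      rwa [hconj, Equiv.symm_apply_apply, Equiv.symm_apply_apply] at this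
  · intro hN
    constructor
    · intro a
      rw [hconj]
      exact hN.1 _
    · intro a b hba
      rw [hconj]
      by_cases hij : σ.symm a = σ.symm b
      · exfalso
        have hab2 : a = b := by
          have := congrArg σ hij
          rwa [Equiv.apply_symm_apply, Equiv.apply_symm_apply] at this
        rw [hab2] at hba; exact lt_irrefl _ hba
      apply hN.2 _ _ hij
      intro hlt
      have hlt' : ((σ (σ.symm a)) : ℕ) < ((σ (σ.symm b)) : ℕ) := hlt
      rw [Equiv.apply_symm_apply, Equiv.apply_symm_apply] at hlt'
      have := Fin.lt_def.mp hba
      omega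

lemma lower_iff_unipR
    (hconj : ∀ (X : Matrix (Fin n) (Fin n) ℂ) a b, (Q * X * P) a b = X (σ.symm a) (σ.symm b))
    (N : Matrix (Fin n) (Fin n) ℂ) :
    IsLowerUnipotent (Q * N * P) ↔ UnipR (fun x => n - ((σ x : ℕ))) N := by
  constructor
  · intro hA
    constructor
    · intro i
      have := hA.1 (σ i)
      rwa [hconj, Equiv.symm_apply_apply] at this
    · intro i j hij hρ
      have hb1 : (σ i : ℕ) < n := (σ i).isLt
      have hb2 : (σ j : ℕ) < n := (σ j).isLt
      have hij' : (σ i : ℕ) ≠ (σ j : ℕ) := fun h => hij (σ.injective (Fin.ext h))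
      have hρ' : ¬ (n - (σ i : ℕ) < n - (σ j : ℕ)) := hρ
      have hji : σ i < σ j := by
        rw [Fin.lt_def]; omega
      have := hA.2 (σ i) (σ j) hji
      rwa [hconj, Equiv.symm_apply_apply, Equiv.symm_apply_apply] at this
  · intro hN
    constructor
    · intro a
      rw [hconj]
      exact hN.1 _
    · intro a b hab
      rw [hconj]
      by_cases hij : σ.symm a = σ.symm b
      · exfalso
        have hab2 : a = b := by
          have := congrArg σ hij
          rwa [Equiv.apply_symm_apply, Equiv.apply_symm_apply] at this
        rw [hab2] at hab; exact lt_irrefl _ hab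
      apply hN.2 _ _ hij
      intro hlt
      have hlt' : n - ((σ (σ.symm a)) : ℕ) < n - ((σ (σ.symm b)) : ℕ) := hlt
      rw [Equiv.apply_symm_apply, Equiv.apply_symm_apply] at hlt'
      have h2 := Fin.lt_def.mp hab
      have hb1 : (a : ℕ) < n := a.isLt
      have hb2 : (b : ℕ) < n := b.isLt
      omega

end PermAux

lemma lowerSet_ncard_iff {r : ℕ} (T : Set (Fin r))
    (hlow : ∀ s t : Fin r, s ≤ t → t ∈ T → s ∈ T) (c : ℕ) (hc : T.ncard = c) :
    ∀ t, t ∈ T ↔ (t : ℕ) < c := by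
  have hfin : T.Finite := Set.toFinite T
  have hcard : hfin.toFinset.card = c := by
    rw [← Set.ncard_eq_toFinset_card T hfin]; exact hc
  intro t
  constructor
  · intro ht
    have hsub : Finset.Iic t ⊆ hfin.toFinset := by
      intro s hs
      rw [Set.Finite.mem_toFinset]
      exact hlow s t (Finset.mem_Iic.mp hs) ht
    have := Finset.card_le_card hsub
    rw [hcard, Fin.card_Iic] at this
    omega
  · intro htc
    by_contra hnt
    have hsub : hfin.toFinset ⊆ Finset.Iio t := by
      intro s hs
      rw [Set.Finite.mem_toFinset] at hs
      rw [Finset.mem_Iio]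
      by_contra hst
      exact hnt (hlow t s (not_lt.mp hst) hs)
    have := Finset.card_le_card hsub
    rw [hcard, Fin.card_Iio] at this
    omega

lemma ofFn_drop_take {M : Type*} {r : ℕ} (K : Fin r → M) (a b : ℕ) (hab : a + b ≤ r) :
    ((List.ofFn K).drop a).take b
      = List.ofFn (fun s : Fin b => K ⟨a + (s : ℕ), by omega⟩) := by
  apply List.ext_getElem
  · simp; omega
  · intro m h1 h2
    simp only [List.getElem_take, List.getElem_drop, List.getElem_ofFn]

/-- **From Stokes factors to Stokes matrices over a full period.** Let `l` be the number of
anti-Stokes directions in the half-period `[θ₀, θ₀ + π/(k−1))` and let `d₁ < ⋯ < d_r`,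
`r = (2k−2)l`, be the anti-Stokes directions in `[θ₀, θ₀ + 2π)`. Let `P` be the permutation
matrix (`P_{ij} = δ_{σ(i)j}`) of the total order determined by the first half-period, and
for a tuple `K` of Stokes factors set `Sᵢ := P⁻¹ · K_{il} ⋯ K_{(i−1)l+1} · P` for
`i = 1, …, 2k−2`. Then each `Sᵢ` is upper-triangular unipotent for odd `i` and
lower-triangular unipotent for even `i`, and `(K₁, …, K_r) ↦ (S₁, …, S_{2k−2})` is a
bijection from `∏ₜ Sto(dₜ)` onto `(U₊ × U₋)^{k−1}`. -/
theorem stokesFactors_to_stokesMatrices_bijective (n k : ℕ) (hk : 2 ≤ k) (u : Fin n → ℂ)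
    (hu : Function.Injective u) (θ₀ : ℝ) (l r : ℕ)
    (hl : {θ ∈ Set.Ico θ₀ (θ₀ + Real.pi / ((k : ℝ) - 1)) | IsAntiStokes u k θ}.ncard = l)
    (hr : r = (2 * k - 2) * l)
    (d : Fin r → ℝ) (hmono : StrictMono d)
    (hmem : ∀ t, d t ∈ Set.Ico θ₀ (θ₀ + 2 * Real.pi) ∧ IsAntiStokes u k (d t))
    (hall : ∀ θ ∈ Set.Ico θ₀ (θ₀ + 2 * Real.pi), IsAntiStokes u k θ → ∃ t, d t = θ)
    (σ : Equiv.Perm (Fin n))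
    (hσ : ∀ i j : Fin n, i ≠ j →
      ((∃ t : Fin r, (t : ℕ) < l ∧ IsRoot u k i j (d t)) ↔ σ i < σ j))
    (P : Matrix (Fin n) (Fin n) ℂ)
    (hP : ∀ i j : Fin n, P i j = if σ i = j then 1 else 0)
    (S : (Fin r → Matrix (Fin n) (Fin n) ℂ) → ℕ → Matrix (Fin n) (Fin n) ℂ)
    (hS : ∀ (K : Fin r → Matrix (Fin n) (Fin n) ℂ) (i : ℕ),
      S K i = P⁻¹ * ((((List.ofFn K).drop ((i - 1) * l)).take l).reverse.prod) * P) :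
    (∀ K : Fin r → Matrix (Fin n) (Fin n) ℂ, (∀ t, StoMem u k (d t) (K t)) →
      ∀ i ∈ Finset.Icc 1 (2 * k - 2),
        (Odd i → IsUpperUnipotent (S K i)) ∧ (Even i → IsLowerUnipotent (S K i))) ∧
    (∀ K K' : Fin r → Matrix (Fin n) (Fin n) ℂ,
      (∀ t, StoMem u k (d t) (K t)) → (∀ t, StoMem u k (d t) (K' t)) →
      (∀ i ∈ Finset.Icc 1 (2 * k - 2), S K i = S K' i) → K = K') ∧
    (∀ T : ℕ → Matrix (Fin n) (Fin n) ℂ,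
      (∀ i ∈ Finset.Icc 1 (2 * k - 2),
        (Odd i → IsUpperUnipotent (T i)) ∧ (Even i → IsLowerUnipotent (T i))) →
      ∃ K : Fin r → Matrix (Fin n) (Fin n) ℂ,
        (∀ t, StoMem u k (d t) (K t)) ∧ ∀ i ∈ Finset.Icc 1 (2 * k - 2), S K i = T i) := by
  classical
  -- numeric facts
  have hk2R : (2:ℝ) ≤ (k:ℝ) := by exact_mod_cast hk
  have hπ := Real.pi_pos
  set h : ℝ := Real.pi / ((k : ℝ) - 1) with hh
  have hpos : 0 < h := div_pos hπ (by linarith)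
  have hcast : ((2*k-2 : ℕ) : ℝ) = 2*((k:ℝ)-1) := by
    rw [Nat.cast_sub (by omega)]
    push_cast; ring
  have h2π : ((2*k-2 : ℕ) : ℝ) * h = 2 * Real.pi := by
    have hne : (k:ℝ) - 1 ≠ 0 := by linarith
    rw [hcast, hh]
    field_simp
  -- permutation matrix facts
  set Q : Matrix (Fin n) (Fin n) ℂ := Matrix.of (fun a b => if σ b = a then 1 else 0) with hQdef
  have hQ : ∀ a b, Q a b = if σ b = a then 1 else 0 := fun a b => rfl
  obtain ⟨hPQ, hQP, hconj⟩ := perm_facts σ P Q hP hQ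
  have hPinv : P⁻¹ = Q := Matrix.inv_eq_right_inv hPQ
  have hsand : ∀ A : Matrix (Fin n) (Fin n) ℂ, P * (Q * A * P) * Q = A := by
    intro A
    rw [show P * (Q * A * P) * Q = (P*Q) * A * (P*Q) by simp only [Matrix.mul_assoc], hPQ,
      Matrix.one_mul, Matrix.mul_one]
  have hsand' : ∀ A : Matrix (Fin n) (Fin n) ℂ, Q * (P * A * Q) * P = A := by
    intro A
    rw [show Q * (P * A * Q) * P = (Q*P) * A * (Q*P) by simp only [Matrix.mul_assoc], hQP,
      Matrix.one_mul, Matrix.mul_one]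
  -- anti-Stokes shift
  have hAS_shift : ∀ θ : ℝ, IsAntiStokes u k (θ + h) ↔ IsAntiStokes u k θ :=
    fun θ => antiStokes_shift u hk
  have hl' : {θ ∈ Set.Ico θ₀ (θ₀ + h) | IsAntiStokes u k θ}.ncard = l := hl
  have hsubrange : ∀ (α β : ℝ), θ₀ ≤ α → β ≤ θ₀ + 2*Real.pi →
      {θ ∈ Set.Ico α β | IsAntiStokes u k θ} ⊆ Set.range d := by
    rintro α β hα hβ θ ⟨⟨h1, h2⟩, hAS⟩
    obtain ⟨t, ht⟩ := hall θ ⟨by linarith, by linarith⟩ hAS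
    exact ⟨t, ht⟩
  have hβbound : ∀ m : ℕ, m ≤ 2*k-2 → (m:ℝ)*h ≤ 2*Real.pi := by
    intro m hm
    have h1 : (m:ℝ) ≤ ((2*k-2:ℕ):ℝ) := by exact_mod_cast hm
    calc (m:ℝ)*h ≤ ((2*k-2:ℕ):ℝ)*h := by nlinarith
    _ = 2*Real.pi := h2π
  -- single block counts
  have hB : ∀ m : ℕ, m + 1 ≤ 2*k-2 →
      {θ ∈ Set.Ico (θ₀ + (m:ℝ)*h) (θ₀ + ((m:ℝ)+1)*h) | IsAntiStokes u k θ}.ncard = l := by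
    intro m
    induction m with
    | zero =>
      intro _
      rw [show θ₀ + ((0:ℕ):ℝ)*h = θ₀ by norm_num, show θ₀ + (((0:ℕ):ℝ)+1)*h = θ₀ + h by norm_num]
      exact hl'
    | succ m ih =>
      intro hm
      have him : {θ ∈ Set.Ico (θ₀ + ((m+1:ℕ):ℝ)*h) (θ₀ + (((m+1:ℕ):ℝ)+1)*h) | IsAntiStokes u k θ}
          = (fun x => x + h) ''
            {θ ∈ Set.Ico (θ₀ + (m:ℝ)*h) (θ₀ + ((m:ℝ)+1)*h) | IsAntiStokes u k θ} := by
        ext θ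
        simp only [Set.mem_setOf_eq, Set.mem_Ico, Set.mem_image]
        constructor
        · rintro ⟨⟨h1, h2⟩, hAS⟩
          push_cast at h1 h2
          refine ⟨θ - h, ⟨⟨by linarith, by linarith⟩, ?_⟩, by ring⟩
          have he : θ - h + h = θ := by ring
          rw [← he] at hAS
          exact (hAS_shift (θ - h)).mp hAS
        · rintro ⟨y, ⟨⟨h1, h2⟩, hAS⟩, rfl⟩
          push_cast
          exact ⟨⟨by linarith, by linarith⟩, (hAS_shift y).mpr hAS⟩
      rw [him, Set.ncard_image_of_injective _ (add_left_injective h)]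
      exact ih (by omega)
  -- cumulative counts
  have hcum : ∀ m : ℕ, m ≤ 2*k-2 →
      {θ ∈ Set.Ico θ₀ (θ₀ + (m:ℝ)*h) | IsAntiStokes u k θ}.ncard = m * l := by
    intro m
    induction m with
    | zero =>
      intro _
      have hempty : Set.Ico θ₀ (θ₀ + ((0:ℕ):ℝ)*h) = ∅ := by
        apply Set.Ico_eq_empty; norm_num
      rw [show {θ ∈ Set.Ico θ₀ (θ₀ + ((0:ℕ):ℝ)*h) | IsAntiStokes u k θ} = ∅ by
        rw [hempty]; ext θ; simp]
      simp
    | succ m ih =>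
      intro hm
      have hmh : (0:ℝ) ≤ (m:ℝ)*h := by positivity
      have hsplit : {θ ∈ Set.Ico θ₀ (θ₀ + ((m+1:ℕ):ℝ)*h) | IsAntiStokes u k θ}
          = {θ ∈ Set.Ico θ₀ (θ₀ + (m:ℝ)*h) | IsAntiStokes u k θ}
            ∪ {θ ∈ Set.Ico (θ₀ + (m:ℝ)*h) (θ₀ + ((m:ℝ)+1)*h) | IsAntiStokes u k θ} := by
        ext θ
        simp only [Set.mem_setOf_eq, Set.mem_Ico, Set.mem_union]
        push_cast
        constructor
        · rintro ⟨⟨h1, h2⟩, hAS⟩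
          by_cases hθ : θ < θ₀ + (m:ℝ)*h
          · exact Or.inl ⟨⟨h1, hθ⟩, hAS⟩
          · exact Or.inr ⟨⟨not_lt.mp hθ, by linarith⟩, hAS⟩
        · rintro (⟨⟨h1, h2⟩, hAS⟩ | ⟨⟨h1, h2⟩, hAS⟩)
          · exact ⟨⟨h1, by linarith⟩, hAS⟩
          · exact ⟨⟨by linarith, by linarith⟩, hAS⟩
      have hdisj : Disjoint {θ ∈ Set.Ico θ₀ (θ₀ + (m:ℝ)*h) | IsAntiStokes u k θ}
          {θ ∈ Set.Ico (θ₀ + (m:ℝ)*h) (θ₀ + ((m:ℝ)+1)*h) | IsAntiStokes u k θ} := by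
        rw [Set.disjoint_left]
        rintro θ ⟨⟨h1, h2⟩, hAS⟩ ⟨⟨h3, h4⟩, hAS'⟩
        linarith
      have hf1 : {θ ∈ Set.Ico θ₀ (θ₀ + (m:ℝ)*h) | IsAntiStokes u k θ}.Finite := by
        apply (Set.finite_range d).subset
        apply hsubrange _ _ le_rfl
        have := hβbound m (by omega); linarith
      have hf2 : {θ ∈ Set.Ico (θ₀ + (m:ℝ)*h) (θ₀ + ((m:ℝ)+1)*h) | IsAntiStokes u k θ}.Finite := by
        apply (Set.finite_range d).subset
        apply hsubrange _ _ (by linarith)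
        have := hβbound (m+1) hm
        push_cast at this
        linarith
      rw [hsplit, Set.ncard_union_eq hdisj hf1 hf2, ih (by omega), hB m hm]
      ring
  -- block decomposition of the index set
  have hT : ∀ m : ℕ, m ≤ 2*k-2 → ∀ t : Fin r, ((t:ℕ) < m*l ↔ d t < θ₀ + (m:ℝ)*h) := by
    intro m hm
    have himg : d '' {t : Fin r | d t < θ₀ + (m:ℝ)*h}
        = {θ ∈ Set.Ico θ₀ (θ₀ + (m:ℝ)*h) | IsAntiStokes u k θ} := by
      ext θ
      constructor
      · rintro ⟨t, ht, rfl⟩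
        exact ⟨⟨(hmem t).1.1, ht⟩, (hmem t).2⟩
      · rintro ⟨⟨h1, h2⟩, hAS⟩
        have hub : θ < θ₀ + 2*Real.pi := by
          have := hβbound m hm; linarith
        obtain ⟨t, rfl⟩ := hall θ ⟨h1, hub⟩ hAS
        exact ⟨t, h2, rfl⟩
    have hcard : ({t : Fin r | d t < θ₀ + (m:ℝ)*h}).ncard = m*l := by
      rw [← Set.ncard_image_of_injective _ hmono.injective, himg, hcum m hm]
    intro t
    exact (lowerSet_ncard_iff _
      (fun s t hst ht => lt_of_le_of_lt (hmono.monotone hst) ht) _ hcard t).symm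
  have hlr : l ≤ r := by
    rw [hr]
    calc l = 1*l := (one_mul l).symm
    _ ≤ (2*k-2)*l := Nat.mul_le_mul_right l (by omega)
  set d0 : Fin l → ℝ := fun s => d ⟨(s:ℕ), lt_of_lt_of_le s.2 hlr⟩ with hd0
  have hfirst : ∀ s : Fin l, d0 s ∈ Set.Ico θ₀ (θ₀ + h) := by
    intro s
    refine ⟨(hmem _).1.1, ?_⟩
    have h1 := (hT 1 (by omega) ⟨(s:ℕ), lt_of_lt_of_le s.2 hlr⟩).mp (by simpa using s.2)
    norm_num at h1
    exact h1
  have hbound : ∀ (m : ℕ), m < 2*k-2 → ∀ s : Fin l, m*l + (s:ℕ) < r := by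
    intro m hm s
    rw [hr]
    calc m*l + (s:ℕ) < m*l + l := by omega
    _ = (m+1)*l := by ring
    _ ≤ (2*k-2)*l := Nat.mul_le_mul_right l (by omega)
  -- the shift identity for blocks
  have hshift : ∀ (m : ℕ) (hm : m < 2*k-2) (s : Fin l),
      d ⟨m*l + (s:ℕ), hbound m hm s⟩ = d0 s + (m:ℝ)*h := by
    rcases Nat.eq_zero_or_pos l with hl0 | hl0
    · intro m hm s; exact absurd s.2 (by omega)
    intro m hm s
    set e : Fin r → ℝ :=
      fun t => d0 ⟨(t:ℕ) % l, Nat.mod_lt _ hl0⟩ + (((t:ℕ)/l : ℕ) : ℝ) * h with he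
    have hdiv : ∀ t : Fin r, (t:ℕ)/l < 2*k-2 := by
      intro t
      rw [Nat.div_lt_iff_lt_mul hl0]
      exact lt_of_lt_of_eq t.2 hr
    have heband : ∀ t : Fin r,
        θ₀ + (((t:ℕ)/l : ℕ):ℝ)*h ≤ e t ∧ e t < θ₀ + ((((t:ℕ)/l : ℕ):ℝ)+1)*h := by
      intro t
      obtain ⟨ha, hb⟩ := hfirst ⟨(t:ℕ) % l, Nat.mod_lt _ hl0⟩
      constructor
      · simp only [he]; linarith
      · simp only [he]; nlinarith
    have hemono : StrictMono e := by
      intro s1 t1 hst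
      have hst' : (s1:ℕ) < (t1:ℕ) := hst
      have hdiv_le : (s1:ℕ)/l ≤ (t1:ℕ)/l := Nat.div_le_div_right (le_of_lt hst')
      rcases eq_or_lt_of_le hdiv_le with heq | hlt2
      · have hmod : (s1:ℕ) % l < (t1:ℕ) % l := by
          have e1 := Nat.div_add_mod (s1:ℕ) l
          have e2 := Nat.div_add_mod (t1:ℕ) l
          rw [heq] at e1
          omega
        have hdd : d0 ⟨(s1:ℕ)%l, Nat.mod_lt _ hl0⟩ < d0 ⟨(t1:ℕ)%l, Nat.mod_lt _ hl0⟩ := by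
          apply hmono
          exact Fin.mk_lt_mk.mpr hmod
        simp only [he, heq]
        exact add_lt_add_left hdd _
      · obtain ⟨_, hb⟩ := heband s1
        obtain ⟨ha, _⟩ := heband t1
        have hcastle : ((((s1:ℕ)/l : ℕ):ℝ) + 1) ≤ (((t1:ℕ)/l : ℕ):ℝ) := by
          exact_mod_cast hlt2
        have hmul := mul_le_mul_of_nonneg_right hcastle (le_of_lt hpos)
        calc e s1 < θ₀ + ((((s1:ℕ)/l : ℕ):ℝ) + 1) * h := hb
        _ ≤ θ₀ + (((t1:ℕ)/l : ℕ):ℝ) * h := by linarith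
        _ ≤ e t1 := ha
    have herange : Set.range e = Set.range d := by
      apply Set.eq_of_subset_of_ncard_le ?_ ?_ (Set.finite_range d)
      · rintro θ ⟨t, rfl⟩
        have hAS : IsAntiStokes u k (e t) := by
          simp only [he]
          rw [hh]
          exact antiStokes_shift_iter u hk _ _ ((hmem _).2)
        obtain ⟨ha, hb⟩ := heband t
        have hub : e t < θ₀ + 2*Real.pi := by
          have h6 : (t:ℕ)/l + 1 ≤ 2*k-2 := hdiv t
          have h7 : ((((t:ℕ)/l : ℕ)):ℝ) + 1 ≤ ((2*k-2:ℕ):ℝ) := by exact_mod_cast h6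
          have hmul := mul_le_mul_of_nonneg_right h7 (le_of_lt hpos)
          calc e t < θ₀ + (((((t:ℕ)/l : ℕ)):ℝ) + 1) * h := hb
          _ ≤ θ₀ + ((2*k-2:ℕ):ℝ) * h := by linarith
          _ = θ₀ + 2*Real.pi := by rw [h2π]
        have hlb : θ₀ ≤ e t := by
          have h8 : (0:ℝ) ≤ (((t:ℕ)/l : ℕ):ℝ)*h := by positivity
          calc θ₀ ≤ θ₀ + (((t:ℕ)/l : ℕ):ℝ)*h := by linarith
          _ ≤ e t := ha
        obtain ⟨t', ht'⟩ := hall (e t) ⟨hlb, hub⟩ hAS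
        exact ⟨t', ht'⟩
      · rw [← Set.image_univ, ← Set.image_univ,
          Set.ncard_image_of_injective _ hmono.injective,
          Set.ncard_image_of_injective _ hemono.injective]
    have hed : e = d := (hemono.range_inj hmono).mp herange
    have hfin1 : (⟨(m*l+(s:ℕ))%l, Nat.mod_lt _ hl0⟩ : Fin l) = s := by
      apply Fin.ext
      simp only []
      rw [Nat.add_comm, Nat.add_mul_mod_self_right, Nat.mod_eq_of_lt s.2]
    have hfin2 : (m*l+(s:ℕ))/l = m := by
      rw [Nat.add_comm, Nat.add_mul_div_right _ _ hl0, Nat.div_eq_of_lt s.2, Nat.zero_add]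
    calc d ⟨m*l + (s:ℕ), hbound m hm s⟩ = e ⟨m*l + (s:ℕ), hbound m hm s⟩ :=
          (congrFun hed _).symm
    _ = d0 ⟨(m*l+(s:ℕ))%l, Nat.mod_lt _ hl0⟩ + (((m*l+(s:ℕ))/l : ℕ):ℝ)*h := by
          simp only [he]
    _ = d0 s + (m:ℝ)*h := by rw [hfin1, hfin2]
  -- root structure
  have hsubσ : ∀ (s : Fin l) (i j : Fin n), IsRoot u k i j (d0 s) → σ i < σ j := by
    intro s i j hroot
    have hij : i ≠ j := isRoot_ne u hroot
    exact (hσ i j hij).mp ⟨⟨(s:ℕ), lt_of_lt_of_le s.2 hlr⟩, s.2, hroot⟩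
  have hcovσ : ∀ i j : Fin n, σ i < σ j → ∃ s : Fin l, IsRoot u k i j (d0 s) := by
    intro i j hlt
    have hij : i ≠ j := by
      intro hij; rw [hij] at hlt; exact lt_irrefl _ hlt
    obtain ⟨t, htl, hroot⟩ := (hσ i j hij).mpr hlt
    refine ⟨⟨(t:ℕ), htl⟩, ?_⟩
    have heq : d0 ⟨(t:ℕ), htl⟩ = d t := congrArg d (Fin.ext rfl)
    rw [heq]
    exact hroot
  have huniqσ : ∀ (s s' : Fin l) (i j : Fin n),
      IsRoot u k i j (d0 s) → IsRoot u k i j (d0 s') → s = s' := by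
    intro s s' i j h1 h2
    have hdist : d0 s = d0 s' := by
      apply isRoot_inj u hk h1 h2
      obtain ⟨a1, b1⟩ := hfirst s
      obtain ⟨a2, b2⟩ := hfirst s'
      rw [← hh, abs_sub_lt_iff]
      constructor <;> linarith
    have h9 := hmono.injective hdist
    have h10 : ((s:ℕ)) = ((s':ℕ)) := congrArg (fun x : Fin r => (x:ℕ)) h9
    exact Fin.val_injective h10
  have hRblock : ∀ (m : ℕ) (hm : m < 2*k-2) (s : Fin l) (i j : Fin n),
      IsRoot u k i j (d ⟨m*l + (s:ℕ), hbound m hm s⟩) ↔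
        (if Even m then IsRoot u k i j (d0 s) else IsRoot u k j i (d0 s)) := by
    intro m hm s i j
    rw [hshift m hm s, hh]
    exact isRoot_shift_nat u hk m i j
  -- packaged block facts
  have hsubE : ∀ (m : ℕ) (hm : m < 2*k-2), Even m → ∀ (s : Fin l) (i j : Fin n),
      IsRoot u k i j (d ⟨m*l + (s:ℕ), hbound m hm s⟩) → ((σ i : ℕ)) < ((σ j : ℕ)) := by
    intro m hm hev s i j hroot
    rw [hRblock m hm s i j, if_pos hev] at hroot
    exact hsubσ s i j hroot
  have hsubO : ∀ (m : ℕ) (hm : m < 2*k-2), ¬ Even m → ∀ (s : Fin l) (i j : Fin n),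
      IsRoot u k i j (d ⟨m*l + (s:ℕ), hbound m hm s⟩) → n - ((σ i : ℕ)) < n - ((σ j : ℕ)) := by
    intro m hm hod s i j hroot
    rw [hRblock m hm s i j, if_neg hod] at hroot
    have := hsubσ s j i hroot
    have h1 := Fin.lt_def.mp this
    have h2 : ((σ i : ℕ)) < n := (σ i).isLt
    omega
  have huniqB : ∀ (m : ℕ) (hm : m < 2*k-2) (s s' : Fin l) (i j : Fin n),
      IsRoot u k i j (d ⟨m*l + (s:ℕ), hbound m hm s⟩) →
      IsRoot u k i j (d ⟨m*l + (s':ℕ), hbound m hm s'⟩) → s = s' := by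
    intro m hm s s' i j h1 h2
    rw [hRblock m hm s i j] at h1
    rw [hRblock m hm s' i j] at h2
    by_cases hev : Even m
    · rw [if_pos hev] at h1 h2
      exact huniqσ s s' i j h1 h2
    · rw [if_neg hev] at h1 h2
      exact huniqσ s s' j i h1 h2
  have hcovE : ∀ (m : ℕ) (hm : m < 2*k-2), Even m → ∀ i j : Fin n,
      ((σ i : ℕ)) < ((σ j : ℕ)) →
      ∃ s : Fin l, IsRoot u k i j (d ⟨m*l + (s:ℕ), hbound m hm s⟩) := by
    intro m hm hev i j hlt
    obtain ⟨s, hs⟩ := hcovσ i j (Fin.lt_def.mpr hlt)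
    refine ⟨s, ?_⟩
    rw [hRblock m hm s i j, if_pos hev]
    exact hs
  have hcovO : ∀ (m : ℕ) (hm : m < 2*k-2), ¬ Even m → ∀ i j : Fin n,
      n - ((σ i : ℕ)) < n - ((σ j : ℕ)) →
      ∃ s : Fin l, IsRoot u k i j (d ⟨m*l + (s:ℕ), hbound m hm s⟩) := by
    intro m hm hod i j hlt
    have h2 : ((σ j : ℕ)) < n := (σ j).isLt
    have hji : σ j < σ i := Fin.lt_def.mpr (by omega)
    obtain ⟨s, hs⟩ := hcovσ j i hji
    refine ⟨s, ?_⟩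
    rw [hRblock m hm s i j, if_neg hod]
    exact hs
  -- block representation of the product
  have hblockrep : ∀ (K : Fin r → Matrix (Fin n) (Fin n) ℂ) (i : ℕ)
      (h1 : 1 ≤ i) (h2 : i ≤ 2*k-2),
      ((List.ofFn K).drop ((i-1)*l)).take l
        = List.ofFn (fun s : Fin l => K ⟨(i-1)*l + (s:ℕ), hbound (i-1) (by omega) s⟩) := by
    intro K i h1 h2
    apply ofFn_drop_take
    calc (i-1)*l + l = ((i-1)+1)*l := by ring
    _ = i*l := by congr 1; omega
    _ ≤ (2*k-2)*l := Nat.mul_le_mul_right l h2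
    _ = r := hr.symm
  refine ⟨?_, ?_, ?_⟩
  · -- part 1 : shapes
    intro K hK i hi
    rw [Finset.mem_Icc] at hi
    have hm : i - 1 < 2*k-2 := by omega
    rw [hS, hPinv, hblockrep K i hi.1 hi.2]
    constructor
    · intro hodd
      have hev : Even (i-1) := by
        rcases hodd with ⟨w, hw⟩
        exact ⟨w, by omega⟩
      apply (upper_iff_unipR hconj _).mpr
      apply unipR_list_prod
      intro M hM
      rw [List.mem_reverse, List.mem_ofFn] at hM
      obtain ⟨s, rfl⟩ := hM
      exact stoR_unipR _ _ (fun t a b hR => hsubE (i-1) hm hev t a b hR)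
        ⟨(hK _).1, (hK _).2⟩
    · intro heven
      have hod : ¬ Even (i-1) := by
        rintro ⟨v, hv⟩
        rcases heven with ⟨w, hw⟩
        have := hi.1
        omega
      apply (lower_iff_unipR hconj _).mpr
      apply unipR_list_prod
      intro M hM
      rw [List.mem_reverse, List.mem_ofFn] at hM
      obtain ⟨s, rfl⟩ := hM
      exact stoR_unipR _ _ (fun t a b hR => hsubO (i-1) hm hod t a b hR)
        ⟨(hK _).1, (hK _).2⟩
  · -- part 2 : injectivity
    intro K K' hK hK' hSEq
    funext t
    rcases Nat.eq_zero_or_pos l with hl0 | hl0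
    · exfalso
      have h0 : (t:ℕ) < (2*k-2)*l := lt_of_lt_of_eq t.2 hr
      rw [hl0, Nat.mul_zero] at h0
      exact Nat.not_lt_zero _ h0
    have hm : (t:ℕ)/l < 2*k-2 := by
      rw [Nat.div_lt_iff_lt_mul hl0]
      exact lt_of_lt_of_eq t.2 hr
    have hi : (t:ℕ)/l + 1 ∈ Finset.Icc 1 (2*k-2) :=
      Finset.mem_Icc.mpr ⟨Nat.le_add_left 1 _, by omega⟩
    have hSe := hSEq ((t:ℕ)/l + 1) hi
    rw [hS, hS, hPinv,
      hblockrep K ((t:ℕ)/l + 1) (Nat.le_add_left 1 _) (by omega),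
      hblockrep K' ((t:ℕ)/l + 1) (Nat.le_add_left 1 _) (by omega)] at hSe
    have hc := congrArg (fun X => P * X * Q) hSe
    simp only [hsand] at hc
    have hKeq : (fun s : Fin l =>
          K ⟨((t:ℕ)/l+1-1)*l + (s:ℕ), hbound ((t:ℕ)/l+1-1) (by omega) s⟩)
        = (fun s : Fin l =>
          K' ⟨((t:ℕ)/l+1-1)*l + (s:ℕ), hbound ((t:ℕ)/l+1-1) (by omega) s⟩) := by
      rcases Nat.even_or_odd ((t:ℕ)/l) with hev | hod
      · refine core_inj (fun x => ((σ x : ℕ))) _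
          (fun s a b hR => hsubE ((t:ℕ)/l) hm hev s a b hR)
          (fun s s' a b h1 h2 => huniqB ((t:ℕ)/l) hm s s' a b h1 h2)
          (fun a b hlt => hcovE ((t:ℕ)/l) hm hev a b hlt)
          _ _ (fun s => ⟨(hK _).1, (hK _).2⟩) (fun s => ⟨(hK' _).1, (hK' _).2⟩) hc
      · refine core_inj (fun x => n - ((σ x : ℕ))) _
          (fun s a b hR => hsubO ((t:ℕ)/l) hm (Nat.not_even_iff_odd.mpr hod) s a b hR)
          (fun s s' a b h1 h2 => huniqB ((t:ℕ)/l) hm s s' a b h1 h2)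
          (fun a b hlt => hcovO ((t:ℕ)/l) hm (Nat.not_even_iff_odd.mpr hod) a b hlt)
          _ _ (fun s => ⟨(hK _).1, (hK _).2⟩) (fun s => ⟨(hK' _).1, (hK' _).2⟩) hc
    have hts : ((t:ℕ)/l)*l + (t:ℕ)%l = (t:ℕ) := by
      rw [Nat.mul_comm]
      exact Nat.div_add_mod _ _
    have hcf := congrFun hKeq ⟨(t:ℕ)%l, Nat.mod_lt _ hl0⟩
    simp only [] at hcf
    have hidx : (⟨((t:ℕ)/l+1-1)*l + (((t:ℕ)%l : ℕ)),
        hbound ((t:ℕ)/l+1-1) (by omega) ⟨(t:ℕ)%l, Nat.mod_lt _ hl0⟩⟩ : Fin r) = t := by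
      apply Fin.ext
      show ((t:ℕ)/l+1-1)*l + ((t:ℕ)%l) = (t:ℕ)
      rw [Nat.add_sub_cancel]
      exact hts
    rw [hidx] at hcf
    exact hcf
  · -- part 3 : surjectivity
    intro T hT3
    rcases Nat.eq_zero_or_pos l with hl0 | hl0
    · have hsing : ∀ i j : Fin n, i = j := by
        intro i j
        by_contra hij
        rcases lt_trichotomy (σ i) (σ j) with hlt | heq | hlt
        · obtain ⟨t, htl, _⟩ := (hσ i j hij).mpr hlt; omega
        · exact hij (σ.injective heq)
        · obtain ⟨t, htl, _⟩ := (hσ j i (Ne.symm hij)).mpr hlt; omega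
      refine ⟨fun t => 1, fun t =>
        absurd (lt_of_lt_of_eq t.2 (by rw [hr, hl0, Nat.mul_zero])) (Nat.not_lt_zero _), ?_⟩
      intro i hi
      rw [Finset.mem_Icc] at hi
      rw [hS, hPinv]
      have h1 : (((List.ofFn fun _ : Fin r => (1:Matrix (Fin n) (Fin n) ℂ)).drop
          ((i-1)*l)).take l) = [] := by
        rw [hl0]
        exact List.take_zero
      rw [h1]
      simp only [List.reverse_nil, List.prod_nil]
      rw [Matrix.mul_one, hQP]
      have hdiag : ∀ a, T i a a = 1 := by
        rcases Nat.even_or_odd i with he | ho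
        · exact ((hT3 i (Finset.mem_Icc.mpr hi)).2 he).1
        · exact ((hT3 i (Finset.mem_Icc.mpr hi)).1 ho).1
      apply Matrix.ext
      intro a b
      have hab : a = b := hsing a b
      subst hab
      rw [Matrix.one_apply_eq, hdiag]
    · have hsurjB : ∀ mm : Fin (2*k-2), ∃ KB : Fin l → Matrix (Fin n) (Fin n) ℂ,
          (∀ s : Fin l, StoMem u k (d ⟨(mm:ℕ)*l + (s:ℕ), hbound (mm:ℕ) mm.2 s⟩) (KB s)) ∧
            (List.ofFn KB).reverse.prod = P * T ((mm:ℕ)+1) * Q := by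
        intro mm
        have hm : (mm:ℕ) < 2*k-2 := mm.2
        have hiIcc : (mm:ℕ)+1 ∈ Finset.Icc 1 (2*k-2) := Finset.mem_Icc.mpr ⟨by omega, by omega⟩
        rcases Nat.even_or_odd (mm:ℕ) with hev | hod
        · have hodd : Odd ((mm:ℕ)+1) := Even.add_one hev
          have hUp : IsUpperUnipotent (T ((mm:ℕ)+1)) := (hT3 _ hiIcc).1 hodd
          have hN : UnipR (fun x => ((σ x : ℕ))) (P * T ((mm:ℕ)+1) * Q) := by
            apply (upper_iff_unipR hconj _).mp
            rw [hsand']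
            exact hUp
          obtain ⟨KB, hKB1, hKB2⟩ := core_surj (fun x => ((σ x : ℕ)))
            (fun s i j => IsRoot u k i j (d ⟨(mm:ℕ)*l + (s:ℕ), hbound (mm:ℕ) hm s⟩))
            (fun s a b hR => hsubE _ hm hev s a b hR)
            (fun s s' a b ha hb => huniqB _ hm s s' a b ha hb)
            (fun a b hlt => hcovE _ hm hev a b hlt)
            _ hN
          exact ⟨KB, fun s => ⟨(hKB1 s).1, (hKB1 s).2⟩, hKB2⟩
        · have hod' : ¬ Even (mm:ℕ) := Nat.not_even_iff_odd.mpr hod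
          have heven : Even ((mm:ℕ)+1) := Odd.add_one hod
          have hLo : IsLowerUnipotent (T ((mm:ℕ)+1)) := (hT3 _ hiIcc).2 heven
          have hN : UnipR (fun x => n - ((σ x : ℕ))) (P * T ((mm:ℕ)+1) * Q) := by
            apply (lower_iff_unipR hconj _).mp
            rw [hsand']
            exact hLo
          obtain ⟨KB, hKB1, hKB2⟩ := core_surj (fun x => n - ((σ x : ℕ)))
            (fun s i j => IsRoot u k i j (d ⟨(mm:ℕ)*l + (s:ℕ), hbound (mm:ℕ) hm s⟩))
            (fun s a b hR => hsubO _ hm hod' s a b hR)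
            (fun s s' a b ha hb => huniqB _ hm s s' a b ha hb)
            (fun a b hlt => hcovO _ hm hod' a b hlt)
            _ hN
          exact ⟨KB, fun s => ⟨(hKB1 s).1, (hKB1 s).2⟩, hKB2⟩
      choose KB hKB1 hKB2 using hsurjB
      have hdivlt : ∀ t : Fin r, (t:ℕ)/l < 2*k-2 := by
        intro t
        rw [Nat.div_lt_iff_lt_mul hl0]
        exact lt_of_lt_of_eq t.2 hr
      set K : Fin r → Matrix (Fin n) (Fin n) ℂ :=
        fun t => KB ⟨(t:ℕ)/l, hdivlt t⟩ ⟨(t:ℕ)%l, Nat.mod_lt _ hl0⟩ with hKdef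
      refine ⟨K, ?_, ?_⟩
      · intro t
        have h1 := hKB1 ⟨(t:ℕ)/l, hdivlt t⟩ ⟨(t:ℕ)%l, Nat.mod_lt _ hl0⟩
        have hidx : (⟨((⟨(t:ℕ)/l, hdivlt t⟩ : Fin (2*k-2)):ℕ)*l + ((t:ℕ)%l),
            hbound _ (hdivlt t) ⟨(t:ℕ)%l, Nat.mod_lt _ hl0⟩⟩ : Fin r) = t := by
          apply Fin.ext
          simp only []
          rw [Nat.mul_comm]
          exact Nat.div_add_mod _ _
        rw [hidx] at h1
        exact h1
      · intro i hi
        rw [Finset.mem_Icc] at hi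
        have hm : i - 1 < 2*k-2 := by omega
        rw [hS, hPinv, hblockrep K i hi.1 hi.2]
        have hKfun : (fun s : Fin l => K ⟨(i-1)*l + (s:ℕ), hbound (i-1) (by omega) s⟩)
            = KB ⟨i-1, hm⟩ := by
          funext s
          simp only [hKdef]
          refine congr (congrArg KB (Fin.ext ?_)) (Fin.ext ?_)
          · show ((i-1)*l+(s:ℕ))/l = i-1
            rw [Nat.add_comm, Nat.add_mul_div_right _ _ hl0, Nat.div_eq_of_lt s.2,
              Nat.zero_add]
          · show ((i-1)*l+(s:ℕ))%l = (s:ℕ)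
            rw [Nat.add_comm, Nat.add_mul_mod_self_right, Nat.mod_eq_of_lt s.2]
        rw [hKfun, hKB2 ⟨i-1, hm⟩]
        have hieq : (((⟨i-1, hm⟩ : Fin (2*k-2)):ℕ)) + 1 = i := by
          simp only []
          omega
        rw [hieq, hsand']
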